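/- Let S, T₁, T₂ be Hilbert spaces, and let c₁ : S × T₁ → ℝ and c₂ : S × T₂ → ℝ be bounded bilinear forms each satisfying an inf-sup condition for the pairs {S, T₁} and {S, T₂} respectively. Assume S = ker c₁ + ker c₂, where ker cᵢ = {s ∈ S : cᵢ(s,t) = 0 for all t ∈ Tᵢ}, and the decomposition is bounded: every v ∈ S can be written v = w + (v−w) with w ∈ ker c₂, v−w ∈ ker c₁, and ‖w‖ ≤ C‖v‖. Then the bilinear form c : S × (T₁ × T₂) → ℝ defined by c(s,(t₁,t₂)) = c₁(s,t₁) + c₂(s,t₂) satisfies the inf-sup condition for the pair {S, T₁ × T₂}. -/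

import Mathlib

/-- If `c₁`, `c₂` satisfy inf-sup conditions for `{S,T₁}`, `{S,T₂}` and
`S = ker c₁ + ker c₂` with a bounded decomposition, then the combined bilinear
form `c(s,(t₁,t₂)) = c₁(s,t₁) + c₂(s,t₂)` satisfies the inf-sup condition for
`{S, T₁ × T₂}` (product Hilbert norm). -/
theorem stmt1
    {S T₁ T₂ : Type*}
    [NormedAddCommGroup S] [InnerProductSpace ℝ S] [CompleteSpace S]
    [NormedAddCommGroup T₁] [InnerProductSpace ℝ T₁] [CompleteSpace T₁]
    [NormedAddCommGroup T₂] [InnerProductSpace ℝ T₂] [CompleteSpace T₂]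
    (c₁ : S →L[ℝ] T₁ →L[ℝ] ℝ) (c₂ : S →L[ℝ] T₂ →L[ℝ] ℝ)
    (β₁ β₂ : ℝ) (hβ₁ : 0 < β₁) (hβ₂ : 0 < β₂)
    (hinfsup₁ : ∀ t : T₁, β₁ * ‖t‖ ≤ ⨆ s : {s : S // s ≠ 0}, c₁ s.1 t / ‖s.1‖)
    (hinfsup₂ : ∀ t : T₂, β₂ * ‖t‖ ≤ ⨆ s : {s : S // s ≠ 0}, c₂ s.1 t / ‖s.1‖)
    (C : ℝ) (hC : 0 < C)
    (hdecomp : ∀ v : S, ∃ w : S,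
      (∀ t₂ : T₂, c₂ w t₂ = 0) ∧ (∀ t₁ : T₁, c₁ (v - w) t₁ = 0) ∧ ‖w‖ ≤ C * ‖v‖) :
    ∃ β : ℝ, 0 < β ∧ ∀ t₁ : T₁, ∀ t₂ : T₂,
      β * ‖(WithLp.equiv 2 (T₁ × T₂)).symm (t₁, t₂)‖ ≤
        ⨆ s : {s : S // s ≠ 0}, (c₁ s.1 t₁ + c₂ s.1 t₂) / ‖s.1‖ := by
  have hβpos : 0 < (C / β₁ + (1 + C) / β₂)⁻¹ := by positivity
  refine ⟨(C / β₁ + (1 + C) / β₂)⁻¹, hβpos, fun t₁ t₂ => ?_⟩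
  -- the combined sup
  set f : {s : S // s ≠ 0} → ℝ := fun s => (c₁ s.1 t₁ + c₂ s.1 t₂) / ‖s.1‖ with hf
  have hnorm : ‖(WithLp.equiv 2 (T₁ × T₂)).symm (t₁, t₂)‖ ≤ ‖t₁‖ + ‖t₂‖ := by
    rw [WithLp.prod_norm_eq_of_L2]
    have h1 : ‖((WithLp.equiv 2 (T₁ × T₂)).symm (t₁, t₂)).fst‖ = ‖t₁‖ := rfl
    have h2 : ‖((WithLp.equiv 2 (T₁ × T₂)).symm (t₁, t₂)).snd‖ = ‖t₂‖ := rfl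
    rw [h1, h2]
    rw [show ‖t₁‖ + ‖t₂‖ = Real.sqrt ((‖t₁‖ + ‖t₂‖) ^ 2) from
      (Real.sqrt_sq (by positivity)).symm]
    apply Real.sqrt_le_sqrt
    nlinarith [norm_nonneg t₁, norm_nonneg t₂]
  by_cases hne : Nonempty {s : S // s ≠ 0}
  · haveI := hne
    -- boundedness of f
    have hbdd : BddAbove (Set.range f) := by
      refine ⟨‖c₁‖ * ‖t₁‖ + ‖c₂‖ * ‖t₂‖, ?_⟩
      rintro _ ⟨s, rfl⟩
      have hs : (0 : ℝ) < ‖s.1‖ := norm_pos_iff.mpr s.2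
      rw [hf, div_le_iff₀ hs]
      have h1 : c₁ s.1 t₁ ≤ ‖c₁‖ * ‖s.1‖ * ‖t₁‖ := by
        calc c₁ s.1 t₁ ≤ |c₁ s.1 t₁| := le_abs_self _
        _ = ‖c₁ s.1 t₁‖ := rfl
        _ ≤ ‖c₁ s.1‖ * ‖t₁‖ := (c₁ s.1).le_opNorm t₁
        _ ≤ ‖c₁‖ * ‖s.1‖ * ‖t₁‖ :=
          mul_le_mul_of_nonneg_right (c₁.le_opNorm s.1) (norm_nonneg _)
      have h2 : c₂ s.1 t₂ ≤ ‖c₂‖ * ‖s.1‖ * ‖t₂‖ := by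
        calc c₂ s.1 t₂ ≤ |c₂ s.1 t₂| := le_abs_self _
        _ = ‖c₂ s.1 t₂‖ := rfl
        _ ≤ ‖c₂ s.1‖ * ‖t₂‖ := (c₂ s.1).le_opNorm t₂
        _ ≤ ‖c₂‖ * ‖s.1‖ * ‖t₂‖ :=
          mul_le_mul_of_nonneg_right (c₂.le_opNorm s.1) (norm_nonneg _)
      nlinarith [norm_nonneg s.1, c₁.opNorm_nonneg, c₂.opNorm_nonneg,
        norm_nonneg t₁, norm_nonneg t₂]
    set M : ℝ := ⨆ s : {s : S // s ≠ 0}, f s with hM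
    -- M ≥ 0
    obtain ⟨s0⟩ := hne
    have hM0 : 0 ≤ M := by
      have h1 : f s0 ≤ M := le_ciSup hbdd s0
      have hne0 : (-s0.1) ≠ 0 := by simpa using s0.2
      have h2 : f ⟨-s0.1, hne0⟩ ≤ M := le_ciSup hbdd _
      have : f ⟨-s0.1, hne0⟩ = -f s0 := by
        simp only [hf, map_neg, ContinuousLinearMap.neg_apply, norm_neg]; ring
      linarith [this ▸ h2]
    -- key bound 1 : β₁ ‖t₁‖ ≤ C * M
    have key1 : β₁ * ‖t₁‖ ≤ C * M := by
      refine (hinfsup₁ t₁).trans (ciSup_le fun s => ?_)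
      have hs : (0 : ℝ) < ‖s.1‖ := norm_pos_iff.mpr s.2
      obtain ⟨w, hw2, hw1, hwn⟩ := hdecomp s.1
      have hceq : c₁ s.1 t₁ = c₁ w t₁ := by
        have := hw1 t₁; simp only [map_sub, ContinuousLinearMap.sub_apply] at this
        linarith
      rw [div_le_iff₀ hs, hceq]
      by_cases hw0 : w = 0
      · have : (0:ℝ) ≤ C * M * ‖s.1‖ := mul_nonneg (mul_nonneg hC.le hM0) (norm_nonneg _)
        simpa [hw0] using this
      · have hwpos : (0 : ℝ) < ‖w‖ := norm_pos_iff.mpr hw0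
        have hfw : f ⟨w, hw0⟩ ≤ M := le_ciSup hbdd _
        have : c₁ w t₁ / ‖w‖ ≤ M := by
          simpa [hf, hw2 t₂] using hfw
        have h1 : c₁ w t₁ ≤ M * ‖w‖ := (div_le_iff₀ hwpos).mp this
        calc c₁ w t₁ ≤ M * ‖w‖ := h1
        _ ≤ M * (C * ‖s.1‖) := mul_le_mul_of_nonneg_left hwn hM0
        _ = C * M * ‖s.1‖ := by ring
    -- key bound 2 : β₂ ‖t₂‖ ≤ (1+C) * M
    have key2 : β₂ * ‖t₂‖ ≤ (1 + C) * M := by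
      refine (hinfsup₂ t₂).trans (ciSup_le fun s => ?_)
      have hs : (0 : ℝ) < ‖s.1‖ := norm_pos_iff.mpr s.2
      obtain ⟨w, hw2, hw1, hwn⟩ := hdecomp s.1
      have hceq : c₂ s.1 t₂ = c₂ (s.1 - w) t₂ := by
        have := hw2 t₂
        simp only [map_sub, ContinuousLinearMap.sub_apply]
        linarith
      rw [div_le_iff₀ hs, hceq]
      by_cases hu0 : s.1 - w = 0
      · have : (0:ℝ) ≤ (1 + C) * M * ‖s.1‖ :=
          mul_nonneg (mul_nonneg (by linarith) hM0) (norm_nonneg _)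
        simpa [hu0] using this
      · have hupos : (0 : ℝ) < ‖s.1 - w‖ := norm_pos_iff.mpr hu0
        have hfu : f ⟨s.1 - w, hu0⟩ ≤ M := le_ciSup hbdd _
        have h0 : c₁ (s.1 - w) t₁ = 0 := hw1 t₁
        have heq : f ⟨s.1 - w, hu0⟩ = c₂ (s.1 - w) t₂ / ‖s.1 - w‖ := by
          rw [hf]; dsimp only; rw [h0, zero_add]
        have : c₂ (s.1 - w) t₂ / ‖s.1 - w‖ ≤ M := heq ▸ hfu
        have h1 : c₂ (s.1 - w) t₂ ≤ M * ‖s.1 - w‖ := (div_le_iff₀ hupos).mp this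
        have h2 : ‖s.1 - w‖ ≤ (1 + C) * ‖s.1‖ := by
          calc ‖s.1 - w‖ ≤ ‖s.1‖ + ‖w‖ := norm_sub_le _ _
          _ ≤ ‖s.1‖ + C * ‖s.1‖ := by linarith
          _ = (1 + C) * ‖s.1‖ := by ring
        calc c₂ (s.1 - w) t₂ ≤ M * ‖s.1 - w‖ := h1
        _ ≤ M * ((1 + C) * ‖s.1‖) := mul_le_mul_of_nonneg_left h2 hM0
        _ = (1 + C) * M * ‖s.1‖ := by ring
    -- combine
    have ht1 : ‖t₁‖ ≤ C / β₁ * M := by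
      rw [div_mul_eq_mul_div, le_div_iff₀ hβ₁]
      nlinarith
    have ht2 : ‖t₂‖ ≤ (1 + C) / β₂ * M := by
      rw [div_mul_eq_mul_div, le_div_iff₀ hβ₂]
      nlinarith
    have hsum : ‖t₁‖ + ‖t₂‖ ≤ (C / β₁ + (1 + C) / β₂) * M := by
      rw [add_mul]; linarith
    calc (C / β₁ + (1 + C) / β₂)⁻¹ * ‖(WithLp.equiv 2 (T₁ × T₂)).symm (t₁, t₂)‖
        ≤ (C / β₁ + (1 + C) / β₂)⁻¹ * (‖t₁‖ + ‖t₂‖) :=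
          mul_le_mul_of_nonneg_left hnorm hβpos.le
      _ ≤ (C / β₁ + (1 + C) / β₂)⁻¹ * ((C / β₁ + (1 + C) / β₂) * M) :=
          mul_le_mul_of_nonneg_left hsum hβpos.le
      _ = M := by field_simp
  · -- degenerate case : no nonzero element in S
    haveI : IsEmpty {s : S // s ≠ 0} := not_nonempty_iff.mp hne
    have hsup0 : (⨆ s : {s : S // s ≠ 0}, f s) = 0 := by
      rw [iSup_of_empty']
      exact Real.sSup_empty
    have h1 : t₁ = 0 := by
      have := hinfsup₁ t₁
      rw [show (⨆ s : {s : S // s ≠ 0}, c₁ s.1 t₁ / ‖s.1‖) = 0 by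
        rw [iSup_of_empty']; exact Real.sSup_empty] at this
      have : ‖t₁‖ ≤ 0 := by nlinarith [norm_nonneg t₁]
      simpa using le_antisymm this (norm_nonneg t₁)
    have h2 : t₂ = 0 := by
      have := hinfsup₂ t₂
      rw [show (⨆ s : {s : S // s ≠ 0}, c₂ s.1 t₂ / ‖s.1‖) = 0 by
        rw [iSup_of_empty']; exact Real.sSup_empty] at this
      have : ‖t₂‖ ≤ 0 := by nlinarith [norm_nonneg t₂]
      simpa using le_antisymm this (norm_nonneg t₂)
    subst h1; subst h2
    rw [hsup0]
    simp
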